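/- arXiv:math/0310265 — 3 statements merged into one kernel-verified Lean document; each statement's English description precedes it below -/
import Mathlib

section
/- If f ∈ N^o ⊗ N is idempotent (f² = f) and the left-multiplication operators by f and by e on N^o ⊗ N have the same kernel (for every u ∈ N^o ⊗ N, f·u = 0 iff e·u = 0), then there exists g ∈ N with E_{Z(N)}(g) = 1 such that f = (1^o ⊗ g)·e in N^o ⊗ N. -/
/- Context: `N = ⨁_{γ ∈ Γ} M_{n γ}(ℂ)`, with matrix units `matUnit n γ i j`,
`N^o ⊗ N` the algebraic tensor product of the opposite algebra with `N`,
`mulMap` the multiplication map `m(a^o ⊗ b) = a * b`, `sepE` the symmetric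
separating element `e = Σ_γ Σ_{i,j} (1/n_γ) (e^γ_{i,j})^o ⊗ e^γ_{j,i}`, and
`EZ` the canonical conditional expectation onto the center of `N`. -/

open scoped TensorProduct
open MulOpposite

set_option synthInstance.maxHeartbeats 1000000
set_option maxHeartbeats 1000000

/-- The algebra `N = ⨁_{γ ∈ Γ} M_{n γ}(ℂ)`. -/
abbrev NAlg {Γ : Type*} [Fintype Γ] (n : Γ → ℕ) : Type _ :=
  ∀ γ : Γ, Matrix (Fin (n γ)) (Fin (n γ)) ℂ

/-- The matrix units `e^γ_{i,j}` of `N`. -/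
noncomputable def matUnit {Γ : Type*} [Fintype Γ] [DecidableEq Γ] (n : Γ → ℕ)
    (γ : Γ) (i j : Fin (n γ)) : NAlg n :=
  Pi.single γ (Matrix.single i j 1)

/-- The multiplication map `m : N^o ⊗ N → N`, `m(a^o ⊗ b) = ab`. -/
noncomputable def mulMap {Γ : Type*} [Fintype Γ] (n : Γ → ℕ) :
    ((NAlg n)ᵐᵒᵖ ⊗[ℂ] NAlg n) →ₗ[ℂ] NAlg n :=
  (LinearMap.mul' ℂ (NAlg n)).comp
    (TensorProduct.map (opLinearEquiv ℂ).symm.toLinearMap LinearMap.id)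

/-- The symmetric separating element `e = Σ_γ Σ_{i,j} (1/n_γ) (e^γ_{i,j})^o ⊗ e^γ_{j,i}`. -/
noncomputable def sepE {Γ : Type*} [Fintype Γ] [DecidableEq Γ] (n : Γ → ℕ) :
    (NAlg n)ᵐᵒᵖ ⊗[ℂ] NAlg n :=
  ∑ γ : Γ, ∑ i : Fin (n γ), ∑ j : Fin (n γ),
    (n γ : ℂ)⁻¹ • (op (matUnit n γ i j) ⊗ₜ[ℂ] matUnit n γ j i)

/-- `f ∈ N^o ⊗ N` is a separating element of `N` if `f(a^o ⊗ 1) = f(1 ⊗ a)` for all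
`a ∈ N` and `m(f) = 1`. -/
def IsSepElt {Γ : Type*} [Fintype Γ] (n : Γ → ℕ) (f : (NAlg n)ᵐᵒᵖ ⊗[ℂ] NAlg n) : Prop :=
  (∀ a : NAlg n, f * (op a ⊗ₜ[ℂ] (1 : NAlg n)) = f * ((1 : (NAlg n)ᵐᵒᵖ) ⊗ₜ[ℂ] a)) ∧
    mulMap n f = 1

/-- The canonical conditional expectation `E_{Z(N)} : N → Z(N)`,
`E_{Z(N)}(x) = Σ_γ Σ_{i,j} (1/n_γ) e^γ_{i,j} x e^γ_{j,i}`. -/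
noncomputable def EZ {Γ : Type*} [Fintype Γ] [DecidableEq Γ] (n : Γ → ℕ)
    (x : NAlg n) : NAlg n :=
  ∑ γ : Γ, ∑ i : Fin (n γ), ∑ j : Fin (n γ),
    (n γ : ℂ)⁻¹ • (matUnit n γ i j * x * matUnit n γ j i)

section Aux
set_option linter.unusedSectionVars false
variable {Γ : Type*} [Fintype Γ] [DecidableEq Γ] (n : Γ → ℕ)

lemma matUnit_mul_same (γ : Γ) (i j k l : Fin (n γ)) :
    matUnit n γ i j * matUnit n γ k l = if j = k then matUnit n γ i l else 0 := by
  unfold matUnit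
  funext δ
  rcases eq_or_ne δ γ with rfl | h
  · by_cases hjk : j = k <;> simp [Pi.mul_apply, hjk]
  · by_cases hjk : j = k <;> simp [Pi.mul_apply, Pi.single_eq_of_ne h, hjk]

lemma matUnit_mul_left (γ : Γ) (i j : Fin (n γ)) (a : NAlg n) :
    matUnit n γ i j * a = ∑ k, a γ j k • matUnit n γ i k := by
  unfold matUnit
  funext δ
  rcases eq_or_ne δ γ with rfl | h
  · simp only [Pi.mul_apply, Pi.single_eq_same, Finset.sum_apply, Pi.smul_apply]
    ext p q
    simp [Matrix.mul_apply, Matrix.sum_apply, Matrix.single, ite_and,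
      Matrix.one_apply, eq_comm]
  · simp [Pi.mul_apply, Pi.single_eq_of_ne h]

lemma matUnit_mul_right (γ : Γ) (i j : Fin (n γ)) (a : NAlg n) :
    a * matUnit n γ i j = ∑ k, a γ k i • matUnit n γ k j := by
  unfold matUnit
  funext δ
  rcases eq_or_ne δ γ with rfl | h
  · simp only [Pi.mul_apply, Pi.single_eq_same, Finset.sum_apply, Pi.smul_apply]
    ext p q
    simp [Matrix.mul_apply, Matrix.sum_apply, Matrix.single, ite_and,
      Matrix.one_apply, eq_comm]
  · simp [Pi.mul_apply, Pi.single_eq_of_ne h]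

lemma sum_matUnit_diag : (∑ γ : Γ, ∑ j : Fin (n γ), matUnit n γ j j) = 1 := by
  unfold matUnit
  funext δ
  rw [Finset.sum_apply]
  rw [Finset.sum_eq_single δ]
  · rw [Finset.sum_apply]
    simp only [Pi.single_eq_same]
    ext p q
    simp [Matrix.sum_apply, Matrix.single, Matrix.one_apply, ite_and, eq_comm]
  · intro γ _ hγ
    rw [Finset.sum_apply]
    simp [Pi.single_eq_of_ne hγ.symm]
  · simp

noncomputable def psiMap : ((NAlg n)ᵐᵒᵖ ⊗[ℂ] NAlg n) →ₗ[ℂ] NAlg n :=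
  (LinearMap.mul' ℂ (NAlg n)).comp
    ((TensorProduct.map LinearMap.id (opLinearEquiv ℂ : NAlg n ≃ₗ[ℂ] (NAlg n)ᵐᵒᵖ).symm.toLinearMap).comp
      (TensorProduct.comm ℂ _ _).toLinearMap)

@[simp] lemma psiMap_tmul (a : (NAlg n)ᵐᵒᵖ) (b : NAlg n) :
    psiMap n (a ⊗ₜ[ℂ] b) = b * unop a := by
  simp [psiMap]

lemma tmul_mul_sepE (a b : NAlg n) :
    (op a ⊗ₜ[ℂ] b) * sepE n = ∑ γ : Γ, ∑ i : Fin (n γ), ∑ j : Fin (n γ),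
      (n γ : ℂ)⁻¹ • (op (matUnit n γ i j * a) ⊗ₜ[ℂ] (b * matUnit n γ j i)) := by
  simp [sepE, Finset.mul_sum, mul_smul_comm, Algebra.TensorProduct.tmul_mul_tmul,
    ← op_mul]

lemma sepE_mul_tmul (a b : NAlg n) :
    sepE n * (op a ⊗ₜ[ℂ] b) = ∑ γ : Γ, ∑ i : Fin (n γ), ∑ j : Fin (n γ),
      (n γ : ℂ)⁻¹ • (op (a * matUnit n γ i j) ⊗ₜ[ℂ] (matUnit n γ j i * b)) := by
  simp [sepE, Finset.sum_mul, smul_mul_assoc, Algebra.TensorProduct.tmul_mul_tmul,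
    ← op_mul]

lemma comm_sepE (a : NAlg n) :
    (op a ⊗ₜ[ℂ] (1 : NAlg n)) * sepE n = ((1 : (NAlg n)ᵐᵒᵖ) ⊗ₜ[ℂ] a) * sepE n := by
  have h1 : (1 : (NAlg n)ᵐᵒᵖ) = op (1 : NAlg n) := rfl
  rw [h1, tmul_mul_sepE, tmul_mul_sepE]
  refine Finset.sum_congr rfl fun γ _ => Finset.sum_congr rfl fun i _ => ?_
  simp only [matUnit_mul_left, matUnit_mul_right, one_mul, mul_one, Finset.op_sum,
    MulOpposite.op_smul, TensorProduct.sum_tmul, TensorProduct.tmul_sum,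
    TensorProduct.smul_tmul', TensorProduct.tmul_smul, Finset.smul_sum, smul_smul]
  rw [Finset.sum_comm]

lemma psi_tmul_mul_sepE (hn : ∀ γ, 1 ≤ n γ) (a b : NAlg n) :
    psiMap n ((op a ⊗ₜ[ℂ] b) * sepE n) = b * a := by
  rw [tmul_mul_sepE]
  simp only [map_sum, map_smul, psiMap_tmul, unop_op]
  have key : ∀ γ : Γ, ∀ i j : Fin (n γ),
      b * matUnit n γ j i * (matUnit n γ i j * a) = b * matUnit n γ j j * a := by
    intro γ i j
    rw [← mul_assoc, mul_assoc b, matUnit_mul_same]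
    simp
  simp only [key]
  have h2 : ∀ γ : Γ,
      (∑ i : Fin (n γ), ∑ j : Fin (n γ), (n γ : ℂ)⁻¹ • (b * matUnit n γ j j * a))
        = ∑ j : Fin (n γ), b * matUnit n γ j j * a := by
    intro γ
    rw [Finset.sum_comm]
    refine Finset.sum_congr rfl fun j _ => ?_
    rw [Finset.sum_const, Finset.card_univ, Fintype.card_fin,
      ← Nat.cast_smul_eq_nsmul ℂ, smul_smul, mul_inv_cancel₀, one_smul]
    exact Nat.cast_ne_zero.2 (by have := hn γ; omega)
  rw [Finset.sum_congr rfl fun γ _ => h2 γ]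
  have : (∑ γ : Γ, ∑ j : Fin (n γ), b * matUnit n γ j j * a)
      = b * (∑ γ : Γ, ∑ j : Fin (n γ), matUnit n γ j j) * a := by
    simp [Finset.mul_sum, Finset.sum_mul]
  rw [this, sum_matUnit_diag, mul_one]

lemma psi_mul_sepE (hn : ∀ γ, 1 ≤ n γ) (u : (NAlg n)ᵐᵒᵖ ⊗[ℂ] NAlg n) :
    psiMap n (u * sepE n) = psiMap n u := by
  induction u using TensorProduct.induction_on with
  | zero => simp
  | tmul a b =>
    have : a = op (unop a) := rfl
    rw [this, psi_tmul_mul_sepE n hn, psiMap_tmul, unop_op]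
  | add x y hx hy => rw [add_mul, map_add, hx, hy, map_add]

lemma psi_sepE_mul (c : NAlg n) :
    psiMap n (sepE n * (op (1 : NAlg n) ⊗ₜ[ℂ] c)) = EZ n c := by
  rw [sepE_mul_tmul]
  simp only [map_sum, map_smul, psiMap_tmul, unop_op, one_mul, mul_one]
  rw [EZ]
  refine Finset.sum_congr rfl fun γ _ => ?_
  rw [Finset.sum_comm]

lemma mul_sepE_eq (u : (NAlg n)ᵐᵒᵖ ⊗[ℂ] NAlg n) :
    u * sepE n = (op (1 : NAlg n) ⊗ₜ[ℂ] psiMap n u) * sepE n := by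
  induction u using TensorProduct.induction_on with
  | zero => simp
  | tmul a b =>
    have ha : a = op (unop a) := rfl
    rw [ha, psiMap_tmul, unop_op]
    set a' := unop a with ha'
    have h1 : (op a' ⊗ₜ[ℂ] b) = ((1 : (NAlg n)ᵐᵒᵖ) ⊗ₜ[ℂ] b) * (op a' ⊗ₜ[ℂ] (1 : NAlg n)) := by
      simp [Algebra.TensorProduct.tmul_mul_tmul]
    rw [h1, mul_assoc, comm_sepE, ← mul_assoc, Algebra.TensorProduct.tmul_mul_tmul,
      one_mul]
    rfl
  | add x y hx hy =>
    rw [add_mul, hx, hy, map_add, TensorProduct.tmul_add, add_mul]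

lemma psi_sepE (hn : ∀ γ, 1 ≤ n γ) : psiMap n (sepE n) = 1 := by
  have h := psi_mul_sepE n hn 1
  rw [one_mul] at h
  rw [h, Algebra.TensorProduct.one_def, psiMap_tmul]
  simp

lemma sepE_idem (hn : ∀ γ, 1 ≤ n γ) : sepE n * sepE n = sepE n := by
  rw [mul_sepE_eq n (sepE n), psi_sepE n hn]
  rw [show (op (1 : NAlg n) ⊗ₜ[ℂ] (1 : NAlg n)) = (1 : (NAlg n)ᵐᵒᵖ ⊗[ℂ] NAlg n) from
    (Algebra.TensorProduct.one_def).symm, one_mul]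

end Aux

/-- If `f` is idempotent and left multiplication by `f` and by `e` have the same
kernel, then `f = (1 ⊗ g)·e` for some `g ∈ N` with `E_{Z(N)}(g) = 1`. -/
theorem exists_g_of_idem {Γ : Type*} [Fintype Γ] [DecidableEq Γ] [Nonempty Γ]
    (n : Γ → ℕ) (hn : ∀ γ, 1 ≤ n γ) (f : (NAlg n)ᵐᵒᵖ ⊗[ℂ] NAlg n)
    (hidem : f * f = f)
    (hker : ∀ u : (NAlg n)ᵐᵒᵖ ⊗[ℂ] NAlg n, f * u = 0 ↔ sepE n * u = 0) :
    ∃ g : NAlg n, EZ n g = 1 ∧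
      f = (op (1 : NAlg n) ⊗ₜ[ℂ] g) * sepE n := by
  have hfe : f * sepE n = f := by
    have h0 : sepE n * (1 - sepE n) = 0 := by
      rw [mul_sub, mul_one, sepE_idem n hn, sub_self]
    have h1 := (hker (1 - sepE n)).mpr h0
    rw [mul_sub, mul_one, sub_eq_zero] at h1
    exact h1.symm
  have hef : sepE n * f = sepE n := by
    have h0 : f * (1 - f) = 0 := by rw [mul_sub, mul_one, hidem, sub_self]
    have h1 := (hker (1 - f)).mp h0
    rw [mul_sub, mul_one, sub_eq_zero] at h1
    exact h1.symm
  set g := psiMap n f with hg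
  have hfg : f = (op (1 : NAlg n) ⊗ₜ[ℂ] g) * sepE n := by
    conv_lhs => rw [← hfe, mul_sepE_eq n f]
  refine ⟨g, ?_, hfg⟩
  have h2 : sepE n * f = (sepE n * (op (1 : NAlg n) ⊗ₜ[ℂ] g)) * sepE n := by
    rw [hfg, ← mul_assoc]
  have h3 : psiMap n (sepE n * f) = EZ n g := by
    rw [h2, psi_mul_sepE n hn, psi_sepE_mul]
  rw [hef, psi_sepE n hn] at h3
  exact h3.symm
end

section
/- If g ∈ N satisfies E_{Z(N)}(g) = 1 and f = (1^o ⊗ g)·e in N^o ⊗ N, then f is a separating element of N: f(a^o ⊗ 1) = f(1 ⊗ a) for every a ∈ N and m(f) = 1. -/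
/- Context: `N = ⨁_{γ ∈ Γ} M_{n γ}(ℂ)`, with matrix units `matUnit n γ i j`,
`N^o ⊗ N` the algebraic tensor product of the opposite algebra with `N`,
`mulMap` the multiplication map `m(a^o ⊗ b) = a * b`, `sepE` the symmetric
separating element `e = Σ_γ Σ_{i,j} (1/n_γ) (e^γ_{i,j})^o ⊗ e^γ_{j,i}`, and
`EZ` the canonical conditional expectation onto the center of `N`. -/

open scoped TensorProduct
open MulOpposite

set_option maxHeartbeats 1000000
set_option synthInstance.maxHeartbeats 1000000

section Aux

variable {Γ : Type*} [Fintype Γ] [DecidableEq Γ] (n : Γ → ℕ)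

lemma matUnit_mul_of_ne {γ δ : Γ} (h : γ ≠ δ) (i j : Fin (n γ)) (k l : Fin (n δ)) :
    matUnit n γ i j * matUnit n δ k l = 0 := by
  funext ε
  rcases eq_or_ne ε γ with rfl | h1
  · simp [matUnit, Pi.mul_apply, Pi.single_eq_of_ne h]
  · simp [matUnit, Pi.mul_apply, Pi.single_eq_of_ne h1]

omit [DecidableEq Γ] in
lemma mulMap_tmul (a b : NAlg n) : mulMap n (op a ⊗ₜ[ℂ] b) = a * b := by
  simp [mulMap]

lemma NAlg_eq_sum (a : NAlg n) :
    a = ∑ γ : Γ, ∑ i : Fin (n γ), ∑ j : Fin (n γ), a γ i j • matUnit n γ i j := by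
  funext δ
  rw [Finset.sum_apply]
  rw [Finset.sum_eq_single δ]
  · rw [Finset.sum_apply]
    conv_lhs => rw [Matrix.matrix_eq_sum_single (a δ)]
    refine Finset.sum_congr rfl fun i _ => ?_
    rw [Finset.sum_apply]
    refine Finset.sum_congr rfl fun j _ => ?_
    simp [matUnit, Matrix.smul_single]
  · intro γ _ hγ
    rw [Finset.sum_apply]
    refine Finset.sum_eq_zero fun i _ => ?_
    rw [Finset.sum_apply]
    refine Finset.sum_eq_zero fun j _ => ?_
    simp [matUnit, Pi.single_eq_of_ne (Ne.symm hγ)]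
  · simp

lemma sepE_mul_matUnit (δ : Γ) (k l : Fin (n δ)) :
    sepE n * (op (matUnit n δ k l) ⊗ₜ[ℂ] (1 : NAlg n)) =
      sepE n * ((1 : (NAlg n)ᵐᵒᵖ) ⊗ₜ[ℂ] matUnit n δ k l) := by
  unfold sepE
  simp only [Finset.sum_mul]
  refine Finset.sum_congr rfl fun γ _ => ?_
  rcases eq_or_ne γ δ with rfl | h
  · rw [Finset.sum_comm]
    conv_rhs => rw [Finset.sum_comm]
    refine Finset.sum_congr rfl fun j _ => ?_
    simp only [smul_mul_assoc, Algebra.TensorProduct.tmul_mul_tmul,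
      ← op_mul, one_mul, mul_one, matUnit_mul_same, apply_ite op, op_zero,
      TensorProduct.ite_tmul, TensorProduct.tmul_ite, smul_ite, smul_zero]
    rw [Finset.sum_ite_eq, Finset.sum_ite_eq']
    simp
  · refine Finset.sum_congr rfl fun i _ => ?_
    refine Finset.sum_congr rfl fun j _ => ?_
    simp [smul_mul_assoc, Algebra.TensorProduct.tmul_mul_tmul, ← op_mul,
      matUnit_mul_of_ne n (Ne.symm h), matUnit_mul_of_ne n h]

end Aux

/-- If `E_{Z(N)}(g) = 1` and `f = (1 ⊗ g)·e`, then `f` is a separating element of `N`. -/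
theorem isSep_of_g {Γ : Type*} [Fintype Γ] [DecidableEq Γ] [Nonempty Γ]
    (n : Γ → ℕ) (hn : ∀ γ, 1 ≤ n γ) (g : NAlg n) (hg : EZ n g = 1)
    (f : (NAlg n)ᵐᵒᵖ ⊗[ℂ] NAlg n) (hf : f = (op (1 : NAlg n) ⊗ₜ[ℂ] g) * sepE n) :
    IsSepElt n f := by
  have key : ∀ a : NAlg n, sepE n * (op a ⊗ₜ[ℂ] (1 : NAlg n)) =
      sepE n * ((1 : (NAlg n)ᵐᵒᵖ) ⊗ₜ[ℂ] a) := by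
    intro a
    conv_lhs => rw [NAlg_eq_sum n a]
    conv_rhs => rw [NAlg_eq_sum n a]
    rw [Finset.op_sum, TensorProduct.sum_tmul, TensorProduct.tmul_sum, Finset.mul_sum,
      Finset.mul_sum]
    refine Finset.sum_congr rfl fun γ _ => ?_
    rw [Finset.op_sum, TensorProduct.sum_tmul, TensorProduct.tmul_sum, Finset.mul_sum,
      Finset.mul_sum]
    refine Finset.sum_congr rfl fun i _ => ?_
    rw [Finset.op_sum, TensorProduct.sum_tmul, TensorProduct.tmul_sum, Finset.mul_sum,
      Finset.mul_sum]
    refine Finset.sum_congr rfl fun j _ => ?_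
    rw [op_smul, ← TensorProduct.smul_tmul', TensorProduct.tmul_smul, mul_smul_comm,
      mul_smul_comm, sepE_mul_matUnit]
  constructor
  · intro a
    rw [hf, mul_assoc, mul_assoc, key]
  · have h2 : mulMap n ((op (1 : NAlg n) ⊗ₜ[ℂ] g) * sepE n) = EZ n g := by
      unfold sepE EZ
      rw [Finset.mul_sum, map_sum]
      refine Finset.sum_congr rfl fun γ _ => ?_
      rw [Finset.mul_sum, map_sum]
      refine Finset.sum_congr rfl fun i _ => ?_
      rw [Finset.mul_sum, map_sum]
      refine Finset.sum_congr rfl fun j _ => ?_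
      rw [mul_smul_comm, map_smul, Algebra.TensorProduct.tmul_mul_tmul, op_one, one_mul,
        mulMap_tmul, ← mul_assoc]
    rw [hf, h2, hg]
end

section
/- There exists a unique invertible element q of A_t such that Δ(1) = Σ_γ Σ_{i,j=1}^{n_γ} (1/n_γ) κ⁻¹(e^γ_{i,j} q) ⊗ e^γ_{j,i}. -/
/- Context: a finite-dimensional C*-quantum groupoid (weak Hopf C*-algebra)
`(A, Δ, κ, ε)`, together with a fixed system of matrix units `e γ i j`
(`γ ∈ Γ` finite, `1 ≤ i,j ≤ n γ`) spanning the target Cartan subalgebra `A_t`.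
The componentwise involution of `A ⊗[ℂ] A` is encoded by the field `starT`
(uniquely determined by `starT_add` and `starT_tmul`). -/

open scoped TensorProduct ComplexOrder

/-- A finite-dimensional C*-quantum groupoid (weak Hopf C*-algebra) with a chosen
system of matrix units for its target Cartan subalgebra. -/
structure WeakHopfCStar (A : Type*) (Γ : Type*) [Fintype Γ] [DecidableEq Γ]
    [NormedRing A] [StarRing A] [CStarRing A] [NormedAlgebra ℂ A] [StarModule ℂ A]
    [FiniteDimensional ℂ A] (n : Γ → ℕ) where
  /-- the coproduct -/
  Δ : A →ₗ[ℂ] A ⊗[ℂ] A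
  /-- the antipode -/
  κ : A →ₗ[ℂ] A
  /-- the counit -/
  ε : A →ₗ[ℂ] ℂ
  /-- the componentwise involution of `A ⊗ A` -/
  starT : A ⊗[ℂ] A → A ⊗[ℂ] A
  starT_add : ∀ x y : A ⊗[ℂ] A, starT (x + y) = starT x + starT y
  starT_tmul : ∀ a b : A, starT (a ⊗ₜ[ℂ] b) = star a ⊗ₜ[ℂ] star b
  Δ_mul : ∀ a b : A, Δ (a * b) = Δ a * Δ b
  Δ_star : ∀ a : A, Δ (star a) = starT (Δ a)
  coassoc : ∀ a : A,
    (TensorProduct.assoc ℂ A A A) ((TensorProduct.map Δ LinearMap.id) (Δ a)) =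
      (TensorProduct.map LinearMap.id Δ) (Δ a)
  κ_antimul : ∀ x y : A, κ (x * y) = κ y * κ x
  κ_star_sq : ∀ a : A, κ (star (κ (star a))) = a
  κ_flip : ∀ a : A,
    (TensorProduct.map κ κ) (Δ a) = (TensorProduct.comm ℂ A A) (Δ (κ a))
  antipode : ∀ x : A,
    (TensorProduct.map ((LinearMap.mul' ℂ A).comp (TensorProduct.map κ LinearMap.id))
        LinearMap.id) ((TensorProduct.map Δ LinearMap.id) (Δ x)) =
      ((1 : A) ⊗ₜ[ℂ] x) * Δ 1
  ε_pos : ∀ a : A, 0 ≤ ε (star a * a)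
  ε_counit_l : ∀ a : A,
    (TensorProduct.lid ℂ A) ((TensorProduct.map ε LinearMap.id) (Δ a)) = a
  ε_counit_r : ∀ a : A,
    (TensorProduct.rid ℂ A) ((TensorProduct.map LinearMap.id ε) (Δ a)) = a
  ε_weak : ∀ x y : A,
    (LinearMap.mul' ℂ ℂ)
        ((TensorProduct.map ε ε) ((x ⊗ₜ[ℂ] (1 : A)) * Δ 1 * ((1 : A) ⊗ₜ[ℂ] y))) =
      ε (x * y)
  n_pos : ∀ γ : Γ, 1 ≤ n γ
  /-- the matrix units of the target Cartan subalgebra `A_t` -/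
  e : (γ : Γ) → Fin (n γ) → Fin (n γ) → A
  e_target : ∀ (γ : Γ) (i j : Fin (n γ)),
    Δ (e γ i j) = Δ 1 * (e γ i j ⊗ₜ[ℂ] (1 : A)) ∧
      Δ (e γ i j) = (e γ i j ⊗ₜ[ℂ] (1 : A)) * Δ 1
  e_mul_same : ∀ (γ : Γ) (i j k l : Fin (n γ)),
    e γ i j * e γ k l = if j = k then e γ i l else 0
  e_mul_ne : ∀ (γ δ : Γ), γ ≠ δ → ∀ (i j : Fin (n γ)) (k l : Fin (n δ)),
    e γ i j * e δ k l = 0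
  e_star : ∀ (γ : Γ) (i j : Fin (n γ)), star (e γ i j) = e γ j i
  e_sum : ∑ γ : Γ, ∑ i : Fin (n γ), e γ i i = 1
  e_span : ∀ x : A,
    (Δ x = Δ 1 * (x ⊗ₜ[ℂ] (1 : A)) ∧ Δ x = (x ⊗ₜ[ℂ] (1 : A)) * Δ 1) →
      x ∈ Submodule.span ℂ
        (Set.range fun p : Σ γ : Γ, Fin (n γ) × Fin (n γ) => e p.1 p.2.1 p.2.2)

namespace WeakHopfCStar

variable {A Γ : Type*} [Fintype Γ] [DecidableEq Γ]
  [NormedRing A] [StarRing A] [CStarRing A] [NormedAlgebra ℂ A] [StarModule ℂ A]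
  [FiniteDimensional ℂ A] {n : Γ → ℕ}

/-- The target Cartan subalgebra `A_t`. -/
def tgt (W : WeakHopfCStar A Γ n) : Set A :=
  {x | W.Δ x = W.Δ 1 * (x ⊗ₜ[ℂ] (1 : A)) ∧ W.Δ x = (x ⊗ₜ[ℂ] (1 : A)) * W.Δ 1}

/-- The source Cartan subalgebra `A_s`. -/
def src (W : WeakHopfCStar A Γ n) : Set A :=
  {x | W.Δ x = W.Δ 1 * ((1 : A) ⊗ₜ[ℂ] x) ∧ W.Δ x = ((1 : A) ⊗ₜ[ℂ] x) * W.Δ 1}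

/-- The inverse of the antipode, `κ⁻¹ = * ∘ κ ∘ *`. -/
noncomputable def κinv (W : WeakHopfCStar A Γ n) (a : A) : A := star (W.κ (star a))

/-- The canonical conditional expectation `E_{Z(A_t)}` of `A_t` onto its center. -/
noncomputable def EZt (W : WeakHopfCStar A Γ n) (x : A) : A :=
  ∑ γ : Γ, ∑ i : Fin (n γ), ∑ j : Fin (n γ),
    (n γ : ℂ)⁻¹ • (W.e γ i j * x * W.e γ j i)

/-- The defining property of the canonical element `q ∈ A_t`:
`Δ(1) = Σ_γ Σ_{i,j} (1/n_γ) κ⁻¹(e^γ_{i,j} q) ⊗ e^γ_{j,i}`. -/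
noncomputable def qFormula (W : WeakHopfCStar A Γ n) (q : A) : Prop :=
  W.Δ 1 = ∑ γ : Γ, ∑ i : Fin (n γ), ∑ j : Fin (n γ),
    (n γ : ℂ)⁻¹ • (W.κinv (W.e γ i j * q) ⊗ₜ[ℂ] W.e γ j i)

end WeakHopfCStar

namespace WeakHopfCStar

variable {A Γ : Type*} [Fintype Γ] [DecidableEq Γ]
  [NormedRing A] [StarRing A] [CStarRing A] [NormedAlgebra ℂ A] [StarModule ℂ A]
  [FiniteDimensional ℂ A] {n : Γ → ℕ}

/-- The deformed coproduct `Δ_k(a) = Δ(a)(1 ⊗ k⁻¹)`. -/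
noncomputable def Δk (W : WeakHopfCStar A Γ n) (k : A) : A →ₗ[ℂ] A ⊗[ℂ] A :=
  (LinearMap.mulRight ℂ ((1 : A) ⊗ₜ[ℂ] Ring.inverse k)).comp W.Δ

/-- The deformed antipode `κ_k(a) = k κ(a) k⁻¹`. -/
noncomputable def κk (W : WeakHopfCStar A Γ n) (k : A) : A →ₗ[ℂ] A :=
  (LinearMap.mulLeft ℂ k).comp ((LinearMap.mulRight ℂ (Ring.inverse k)).comp W.κ)

/-- The deformed counit `ε_k(a) = ε(a k)`. -/
noncomputable def εk (W : WeakHopfCStar A Γ n) (k : A) : A →ₗ[ℂ] ℂ :=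
  W.ε.comp (LinearMap.mulRight ℂ k)

end WeakHopfCStar
open TensorProduct LinearMap

section Helpers

variable {M N : Type*} [AddCommGroup M] [AddCommGroup N] [Module ℂ M] [Module ℂ N]

/-- slice a functional on the left leg -/
noncomputable def sliceL (ψ : M →ₗ[ℂ] ℂ) : M ⊗[ℂ] N →ₗ[ℂ] N :=
  (TensorProduct.lid ℂ N).toLinearMap.comp (LinearMap.rTensor N ψ)

@[simp] lemma sliceL_tmul (ψ : M →ₗ[ℂ] ℂ) (a : M) (b : N) :
    sliceL ψ (a ⊗ₜ[ℂ] b) = ψ a • b := by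
  simp [sliceL]

/-- slice a functional on the right leg -/
noncomputable def sliceR (ψ : N →ₗ[ℂ] ℂ) : M ⊗[ℂ] N →ₗ[ℂ] M :=
  (TensorProduct.rid ℂ M).toLinearMap.comp (LinearMap.lTensor M ψ)

@[simp] lemma sliceR_tmul (ψ : N →ₗ[ℂ] ℂ) (a : M) (b : N) :
    sliceR ψ (a ⊗ₜ[ℂ] b) = ψ b • a := by
  simp [sliceR]

lemma exists_dual_family {ι : Type*} [Fintype ι] [DecidableEq ι] {v : ι → M}
    (hv : LinearIndependent ℂ v) :
    ∃ φ : ι → (M →ₗ[ℂ] ℂ), ∀ i j, φ i (v j) = if i = j then 1 else 0 := by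
  classical
  set W := Submodule.span ℂ (Set.range v)
  obtain ⟨Q, hQ⟩ := W.exists_isCompl
  let b : Module.Basis ι ℂ W := Module.Basis.span hv
  let π : M →ₗ[ℂ] W := W.linearProjOfIsCompl Q hQ
  refine ⟨fun i => (b.coord i).comp π, fun i j => ?_⟩
  have h1 : v j = ((b j : W) : M) := congrArg Subtype.val (Module.Basis.span_apply hv j).symm
  rw [LinearMap.comp_apply, h1, show π ((b j : W) : M) = b j from Submodule.projectionOnto_apply_left hQ _]
  simp [b, Module.Basis.coord_apply, Finsupp.single_apply, eq_comm]

lemma basis_tensor_rep {ι : Type*} [Fintype ι] (b : Module.Basis ι ℂ M) (t : M ⊗[ℂ] N) :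
    ∑ i, b i ⊗ₜ[ℂ] (sliceL (b.coord i) t) = t := by
  induction t with
  | zero => simp
  | tmul a c =>
      simp only [sliceL_tmul, tmul_smul, smul_tmul']
      rw [← TensorProduct.sum_tmul]
      congr 1
      simp only [Module.Basis.coord_apply]
      exact b.sum_repr a
  | add x y hx hy =>
      simp only [map_add, tmul_add]
      rw [Finset.sum_add_distrib, hx, hy]


lemma sum_basis_slice {ι : Type*} [Fintype ι] [DecidableEq ι] (b : Module.Basis ι ℂ M)
    (t : ι → N) (j : ι) : sliceL (b.coord j) (∑ i, b i ⊗ₜ[ℂ] t i) = t j := by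
  rw [map_sum]
  have h : ∀ i : ι, sliceL (b.coord j) (b i ⊗ₜ[ℂ] t i) = if i = j then t i else 0 := by
    intro i
    rw [sliceL_tmul, Module.Basis.coord_apply, Module.Basis.repr_self, Finsupp.single_apply]
    by_cases h : i = j <;> simp [h]
  simp_rw [h]
  simp

lemma sum_sigma_fin {Γ : Type*} [Fintype Γ] {n : Γ → ℕ} {M : Type*} [AddCommMonoid M]
    (g : (Σ γ : Γ, Fin (n γ) × Fin (n γ)) → M) :
    (∑ p, g p) = ∑ γ, ∑ k, ∑ l, g ⟨γ, (k, l)⟩ := by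
  rw [← Finset.univ_sigma_univ, Finset.sum_sigma]
  exact Finset.sum_congr rfl fun γ _ => Fintype.sum_prod_type _

end Helpers
open scoped TensorProduct
open TensorProduct LinearMap

namespace WeakHopfCStar

variable {A Γ : Type*} [Fintype Γ] [DecidableEq Γ]
  [NormedRing A] [StarRing A] [CStarRing A] [NormedAlgebra ℂ A] [StarModule ℂ A]
  [FiniteDimensional ℂ A] {n : Γ → ℕ} (W : WeakHopfCStar A Γ n)

lemma aux_κκinv (a : A) : W.κ (W.κinv a) = a := W.κ_star_sq a

lemma aux_κinvκ (a : A) : W.κinv (W.κ a) = a := by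
  have h := W.κ_star_sq (star a)
  rw [star_star] at h
  have := congrArg star h
  rw [star_star] at this
  exact this

lemma aux_κ_one : W.κ 1 = 1 := by
  have h : (1 : A) = 1 * W.κ 1 := by
    conv_lhs => rw [← W.aux_κκinv 1]
    rw [show W.κinv (1:A) = 1 * W.κinv 1 by rw [one_mul], W.κ_antimul, W.aux_κκinv]
  rw [one_mul] at h; exact h.symm

lemma aux_κinv_one : W.κinv 1 = 1 := by
  have := congrArg W.κinv (W.aux_κ_one)
  rw [W.aux_κinvκ] at this
  exact this.symm

lemma aux_star_κ (x : A) : star (W.κ x) = W.κinv (star x) := by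
  unfold κinv; rw [star_star]

lemma aux_κinv_antimul (x y : A) : W.κinv (x * y) = W.κinv y * W.κinv x := by
  unfold κinv
  rw [star_mul, W.κ_antimul, star_mul]

/-- `κ⁻¹` as a linear map. -/
noncomputable def κIL : A →ₗ[ℂ] A where
  toFun := W.κinv
  map_add' x y := by unfold κinv; rw [star_add, map_add, star_add]
  map_smul' c x := by
    simp only [κinv, star_smul, map_smul, RingHom.id_apply, starRingEnd_self_apply,
      star_star, Complex.star_def]

@[simp] lemma κIL_apply (a : A) : W.κIL a = W.κinv a := rfl


/-- the map `x ↦ κ(x₍₁₎) x₍₂₎` -/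
noncomputable def SS : A →ₗ[ℂ] A :=
  ((LinearMap.mul' ℂ A).comp (TensorProduct.map W.κ LinearMap.id)).comp W.Δ

lemma aux_Sform (x : A) :
    (TensorProduct.map W.SS LinearMap.id) (W.Δ x) = ((1 : A) ⊗ₜ[ℂ] x) * W.Δ 1 := by
  have h := W.antipode x
  rw [← LinearMap.comp_apply, ← TensorProduct.map_comp] at h
  simpa [SS] using h

lemma aux_SS_one_tensor : (TensorProduct.map W.SS LinearMap.id) (W.Δ 1) = W.Δ 1 := by
  rw [W.aux_Sform 1, ← Algebra.TensorProduct.one_def, one_mul]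

lemma aux_S_mul_right (z : A) (hz : W.Δ z = W.Δ 1 * (z ⊗ₜ[ℂ] (1 : A))) (x : A) :
    W.SS (x * z) = W.κ z * W.SS x := by
  have hΔ : W.Δ (x * z) = W.Δ x * (z ⊗ₜ[ℂ] (1 : A)) := by
    rw [W.Δ_mul, hz, ← mul_assoc, ← W.Δ_mul, mul_one]
  have key : ∀ t : A ⊗[ℂ] A,
      (LinearMap.mul' ℂ A) ((TensorProduct.map W.κ LinearMap.id) (t * (z ⊗ₜ[ℂ] (1:A)))) =
        W.κ z * (LinearMap.mul' ℂ A) ((TensorProduct.map W.κ LinearMap.id) t) := by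
    intro t
    induction t with
    | zero => simp
    | tmul a b =>
        simp [Algebra.TensorProduct.tmul_mul_tmul, W.κ_antimul, mul_assoc]
    | add s t hs ht =>
        rw [add_mul, map_add, map_add, hs, map_add, map_add, ht, mul_add]
  simp only [SS, LinearMap.comp_apply]
  rw [hΔ, key]

lemma aux_key1 (z : A) (hz : W.Δ z = W.Δ 1 * (z ⊗ₜ[ℂ] (1 : A))) :
    ((1 : A) ⊗ₜ[ℂ] z) * W.Δ 1 = (W.κ z ⊗ₜ[ℂ] (1 : A)) * W.Δ 1 := by
  have key : ∀ t : A ⊗[ℂ] A,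
      (TensorProduct.map W.SS LinearMap.id) (t * (z ⊗ₜ[ℂ] (1:A))) =
        (W.κ z ⊗ₜ[ℂ] (1 : A)) * (TensorProduct.map W.SS LinearMap.id) t := by
    intro t
    induction t with
    | zero => simp
    | tmul a b =>
        simp only [Algebra.TensorProduct.tmul_mul_tmul, TensorProduct.map_tmul,
          LinearMap.id_coe, id_eq, mul_one]
        rw [W.aux_S_mul_right z hz a, one_mul]
    | add s t hs ht =>
        rw [add_mul, map_add, hs, map_add, ht, mul_add]
  rw [← W.aux_Sform z, hz, key, W.aux_SS_one_tensor]


/-- the linear map `y ↦ (1 ⊗ y) Δ(1)` -/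
noncomputable def Phi : A →ₗ[ℂ] A ⊗[ℂ] A :=
  (LinearMap.mulRight ℂ (W.Δ 1)).comp ((TensorProduct.mk ℂ A A) 1)

@[simp] lemma Phi_apply (y : A) : W.Phi y = ((1 : A) ⊗ₜ[ℂ] y) * W.Δ 1 := rfl

lemma aux_Phi_eq : W.Phi = (TensorProduct.map W.SS LinearMap.id).comp W.Δ := by
  ext y
  simp only [Phi_apply, LinearMap.comp_apply]
  exact (W.aux_Sform y).symm

lemma aux_D2_mul (s t : A ⊗[ℂ] A) :
    (TensorProduct.map LinearMap.id W.Δ) (s * t) =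
      (TensorProduct.map LinearMap.id W.Δ) s * (TensorProduct.map LinearMap.id W.Δ) t := by
  induction s with
  | zero => simp
  | add s₁ s₂ h₁ h₂ => rw [add_mul, map_add, map_add, h₁, h₂, add_mul]
  | tmul a b =>
      induction t with
      | zero => simp
      | add t₁ t₂ h₁ h₂ => rw [mul_add, map_add, map_add, h₁, h₂, mul_add]
      | tmul c d =>
          simp [Algebra.TensorProduct.tmul_mul_tmul, W.Δ_mul]

lemma aux_wb (x : A) :
    (TensorProduct.assoc ℂ A A A) ((TensorProduct.map W.Phi LinearMap.id) (W.Δ x)) =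
      (TensorProduct.map LinearMap.id W.Δ) (((1 : A) ⊗ₜ[ℂ] x) * W.Δ 1) := by
  have hco : (TensorProduct.map W.Δ LinearMap.id) (W.Δ x) =
      (TensorProduct.assoc ℂ A A A).symm ((TensorProduct.map LinearMap.id W.Δ) (W.Δ x)) := by
    rw [LinearEquiv.eq_symm_apply]
    exact W.coassoc x
  have h1 : (TensorProduct.map W.Phi LinearMap.id) (W.Δ x) =
      (TensorProduct.map (TensorProduct.map W.SS LinearMap.id) LinearMap.id)
        ((TensorProduct.map W.Δ LinearMap.id) (W.Δ x)) := by
    rw [W.aux_Phi_eq]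
    generalize W.Δ x = t
    induction t with
    | zero => simp only [LinearMap.map_zero]
    | add t₁ t₂ h₁ h₂ => simp only [map_add, h₁, h₂]
    | tmul a b => simp
  have hM1 : ∀ t : A ⊗[ℂ] (A ⊗[ℂ] A),
      (TensorProduct.assoc ℂ A A A)
        ((TensorProduct.map (TensorProduct.map W.SS LinearMap.id) LinearMap.id)
          ((TensorProduct.assoc ℂ A A A).symm t)) =
        (TensorProduct.map W.SS LinearMap.id) t := by
    intro t
    induction t with
    | zero => simp only [LinearEquiv.map_zero, LinearMap.map_zero]
    | add t₁ t₂ h₁ h₂ => simp only [LinearEquiv.map_add, LinearMap.map_add, h₁, h₂]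
    | tmul a s =>
        induction s with
        | zero => simp only [tmul_zero, LinearEquiv.map_zero, LinearMap.map_zero]
        | add s₁ s₂ h₁ h₂ =>
            simp only [tmul_add, LinearEquiv.map_add, LinearMap.map_add, h₁, h₂]
        | tmul b c =>
            simp only [assoc_symm_tmul, map_tmul, assoc_tmul, LinearMap.id_coe, id_eq]
  have hM2 : ∀ t : A ⊗[ℂ] A,
      (TensorProduct.map W.SS LinearMap.id) ((TensorProduct.map LinearMap.id W.Δ) t) =
        (TensorProduct.map LinearMap.id W.Δ) ((TensorProduct.map W.SS LinearMap.id) t) := by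
    intro t
    induction t with
    | zero => simp
    | add t₁ t₂ h₁ h₂ => simp only [map_add, h₁, h₂]
    | tmul a b => simp
  rw [h1, hco, hM1, hM2, W.aux_Sform x]

end WeakHopfCStar
set_option maxHeartbeats 2000000 in
set_option synthInstance.maxHeartbeats 400000 in
/-- There exists a unique invertible element `q` of `A_t` such that
`Δ(1) = Σ_γ Σ_{i,j} (1/n_γ) κ⁻¹(e^γ_{i,j} q) ⊗ e^γ_{j,i}`. -/
theorem WeakHopfCStar.existsUnique_q {A Γ : Type*} [Fintype Γ] [DecidableEq Γ]
    [NormedRing A] [StarRing A] [CStarRing A] [NormedAlgebra ℂ A] [StarModule ℂ A]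
    [FiniteDimensional ℂ A] {n : Γ → ℕ} (W : WeakHopfCStar A Γ n) :
    ∃! q : A, q ∈ W.tgt ∧ IsUnit q ∧ W.qFormula q := by
  classical
  -- the element Δ(1)
  set u : A ⊗[ℂ] A := W.Δ 1 with hu
  have huu : u * u = u := by rw [hu, ← W.Δ_mul, one_mul]
  -- block dichotomy for matrix units
  have hblock : ∀ (γ : Γ) (k l a b : Fin (n γ)), W.e γ a b = 0 → W.e γ k l = 0 := by
    intro γ k l a b h0
    have h1 : W.e γ k a * W.e γ a b = W.e γ k b := by rw [W.e_mul_same]; simp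
    have h2 : W.e γ k b * W.e γ b l = W.e γ k l := by rw [W.e_mul_same]; simp
    rw [← h2, ← h1, h0, mul_zero, zero_mul]
  -- a basis of A and the second legs of Δ(1)
  set bb : Module.Basis (Fin (Module.finrank ℂ A)) ℂ A := Module.finBasis ℂ A with hbb
  set B : Fin (Module.finrank ℂ A) → A := fun i => sliceL (bb.coord i) u with hB
  have hrep0 : ∑ i, bb i ⊗ₜ[ℂ] B i = u := basis_tensor_rep bb u
  -- step 1 : every B j satisfies Δ(B j) = Δ(1)(B j ⊗ 1)
  have hB1 : ∀ j, W.Δ (B j) = u * (B j ⊗ₜ[ℂ] (1 : A)) := by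
    have hwb := W.aux_wb 1
    rw [← Algebra.TensorProduct.one_def, one_mul, ← hu] at hwb
    -- left side of hwb
    have hphi : ∀ i, W.Phi (bb i) = ∑ j, bb j ⊗ₜ[ℂ] (bb i * B j) := by
      intro i
      rw [W.Phi_apply, ← hu, ← hrep0, Finset.mul_sum]
      refine Finset.sum_congr rfl fun j _ => ?_
      rw [Algebra.TensorProduct.tmul_mul_tmul, one_mul]
    have hL : (TensorProduct.assoc ℂ A A A) ((TensorProduct.map W.Phi LinearMap.id) u) =
        ∑ i, bb i ⊗ₜ[ℂ] (∑ j, (bb j * B i) ⊗ₜ[ℂ] B j) := by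
      rw [← hrep0, map_sum, map_sum]
      have hterm : ∀ i, (TensorProduct.assoc ℂ A A A)
          ((TensorProduct.map W.Phi LinearMap.id) (bb i ⊗ₜ[ℂ] B i)) =
          ∑ j, bb j ⊗ₜ[ℂ] ((bb i * B j) ⊗ₜ[ℂ] B i) := by
        intro i
        rw [TensorProduct.map_tmul, hphi i, LinearMap.id_coe, id_eq,
          TensorProduct.sum_tmul, map_sum]
        refine Finset.sum_congr rfl fun j _ => ?_
        rw [TensorProduct.assoc_tmul]
      simp_rw [hterm]
      rw [Finset.sum_comm]
      refine Finset.sum_congr rfl fun i _ => ?_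
      rw [TensorProduct.tmul_sum]
    have hR : (TensorProduct.map LinearMap.id W.Δ) u = ∑ i, bb i ⊗ₜ[ℂ] W.Δ (B i) := by
      rw [← hrep0, map_sum]
      refine Finset.sum_congr rfl fun i _ => ?_
      simp
    intro j
    have h := congrArg (sliceL (bb.coord j)) (hL.symm.trans (hwb.trans hR))
    rw [sum_basis_slice, sum_basis_slice] at h
    rw [← h, ← hrep0, Finset.sum_mul]
    refine Finset.sum_congr rfl fun i _ => ?_
    rw [Algebra.TensorProduct.tmul_mul_tmul, mul_one]
  -- star of Δ(1)
  set stT : A ⊗[ℂ] A →+ A ⊗[ℂ] A := AddMonoidHom.mk' W.starT W.starT_add with hstT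
  have hsu : stT u = u := by
    have h := W.Δ_star 1
    rw [star_one] at h
    exact h.symm
  have hstmul : ∀ s t : A ⊗[ℂ] A, stT (s * t) = stT t * stT s := by
    intro s t
    induction s with
    | zero => simp
    | add s₁ s₂ h₁ h₂ => rw [add_mul, map_add, h₁, h₂, map_add, mul_add]
    | tmul a b =>
        induction t with
        | zero => simp
        | add t₁ t₂ h₁ h₂ => rw [mul_add, map_add, h₁, h₂, map_add, add_mul]
        | tmul c d =>
            show W.starT _ = W.starT _ * W.starT _
            rw [Algebra.TensorProduct.tmul_mul_tmul, W.starT_tmul, W.starT_tmul,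
              W.starT_tmul, Algebra.TensorProduct.tmul_mul_tmul, ← star_mul, ← star_mul]
  -- the span of the B's
  set V : Submodule ℂ A := Submodule.span ℂ (Set.range B) with hV
  have hV1 : ∀ v ∈ V, W.Δ v = u * (v ⊗ₜ[ℂ] (1 : A)) := by
    intro v hv
    induction hv using Submodule.span_induction with
    | mem x hx => obtain ⟨j, rfl⟩ := hx; exact hB1 j
    | zero => simp
    | add x y hx hy hx' hy' =>
        rw [map_add, hx', hy', TensorProduct.add_tmul, mul_add]
    | smul c x hx hx' =>
        rw [map_smul, hx', ← mul_smul_comm, TensorProduct.smul_tmul']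
  have hVstar : ∀ v ∈ V, W.Δ (star v) = ((star v) ⊗ₜ[ℂ] (1 : A)) * u := by
    intro v hv
    rw [W.Δ_star v]
    show stT (W.Δ v) = _
    rw [hV1 v hv, hstmul, hsu]
    show W.starT _ * u = _
    rw [W.starT_tmul, star_one]
  have hBstarV : ∀ j, star (B j) ∈ V := by
    intro j
    set ψ : A →ₗ[ℂ] ℂ :=
      { toFun := fun a => starRingEnd ℂ (bb.coord j (star a))
        map_add' := fun x y => by
          show starRingEnd ℂ (bb.coord j (star (x + y))) = _
          rw [star_add, map_add, map_add]
        map_smul' := fun c x => by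
          show starRingEnd ℂ (bb.coord j (star (c • x))) = _
          rw [star_smul, map_smul, smul_eq_mul, map_mul]
          simp [Complex.star_def, smul_eq_mul] } with hψ
    have h1 : sliceL ψ u = star (B j) := by
      conv_lhs => rw [← hsu, ← hrep0]
      rw [show stT (∑ i, bb i ⊗ₜ[ℂ] B i) = ∑ i, star (bb i) ⊗ₜ[ℂ] star (B i) by
        rw [map_sum]; exact Finset.sum_congr rfl fun i _ => W.starT_tmul _ _]
      rw [map_sum]
      have hterm : ∀ i, sliceL ψ (star (bb i) ⊗ₜ[ℂ] star (B i)) =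
          (if i = j then (1:ℂ) else 0) • star (B i) := by
        intro i
        rw [sliceL_tmul]
        congr 1
        show starRingEnd ℂ (bb.coord j (star (star (bb i)))) = _
        rw [star_star, Module.Basis.coord_apply, Module.Basis.repr_self, Finsupp.single_apply]
        by_cases h : i = j <;> simp [h]
      simp_rw [hterm]
      simp
    have h2 : sliceL ψ u ∈ V := by
      rw [← hrep0, map_sum]
      refine Submodule.sum_mem V fun i _ => ?_
      rw [sliceL_tmul]
      exact Submodule.smul_mem V _ (Submodule.subset_span ⟨i, rfl⟩)
    rw [← h1]; exact h2
  have hB2 : ∀ j, W.Δ (B j) = (B j ⊗ₜ[ℂ] (1 : A)) * u := by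
    intro j
    have h := hVstar _ (hBstarV j)
    rwa [star_star] at h
  have hBtgt : ∀ j, B j ∈ Submodule.span ℂ
      (Set.range fun p : Σ γ : Γ, Fin (n γ) × Fin (n γ) => W.e p.1 p.2.1 p.2.2) := by
    intro j
    exact W.e_span (B j) ⟨by rw [← hu]; exact hB1 j, by rw [← hu]; exact hB2 j⟩
  -- coefficients of the B's in terms of matrix units
  have hc : ∀ j, ∃ cf : (Σ γ : Γ, Fin (n γ) × Fin (n γ)) → ℂ,
      ∑ p, cf p • W.e p.1 p.2.1 p.2.2 = B j := by
    intro j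
    exact (Submodule.mem_span_range_iff_exists_fun ℂ).1 (hBtgt j)
  choose cf hcf using hc
  set eP : (Σ γ : Γ, Fin (n γ) × Fin (n γ)) → A := fun p => W.e p.1 p.2.1 p.2.2 with heP
  set F : (Σ γ : Γ, Fin (n γ) × Fin (n γ)) → A := fun p => ∑ j, cf j p • bb j with hF
  have hrep1 : ∑ p, F p ⊗ₜ[ℂ] eP p = u := by
    calc ∑ p, F p ⊗ₜ[ℂ] eP p = ∑ p, ∑ j, cf j p • (bb j ⊗ₜ[ℂ] eP p) := by
          refine Finset.sum_congr rfl fun p _ => ?_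
          rw [hF, TensorProduct.sum_tmul]
          exact Finset.sum_congr rfl fun j _ => TensorProduct.smul_tmul' _ _ _
      _ = ∑ j, bb j ⊗ₜ[ℂ] (∑ p, cf j p • eP p) := by
          rw [Finset.sum_comm]
          refine Finset.sum_congr rfl fun j _ => ?_
          rw [TensorProduct.tmul_sum]
          exact Finset.sum_congr rfl fun p _ => (TensorProduct.tmul_smul _ _ _).symm
      _ = ∑ j, bb j ⊗ₜ[ℂ] B j := by
          refine Finset.sum_congr rfl fun j _ => ?_
          rw [hcf j]
      _ = u := hrep0
  -- the flipped representation
  have hrep2 : ∑ p, W.κIL (eP p) ⊗ₜ[ℂ] W.κIL (F p) = u := by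
    have hflip := W.κ_flip 1
    rw [W.aux_κ_one, ← hu] at hflip
    have hinv : ∀ t : A ⊗[ℂ] A,
        (TensorProduct.map W.κIL W.κIL) ((TensorProduct.map W.κ W.κ) t) = t := by
      intro t
      induction t with
      | zero => simp
      | add t₁ t₂ h₁ h₂ => rw [map_add, map_add, h₁, h₂]
      | tmul a b => simp [W.aux_κinvκ]
    have h2 : u = (TensorProduct.map W.κIL W.κIL) ((TensorProduct.comm ℂ A A) u) := by
      conv_lhs => rw [← hinv u, hflip]
    rw [h2, ← hrep1, map_sum, map_sum]
    refine Finset.sum_congr rfl fun p _ => ?_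
    rw [TensorProduct.comm_tmul, TensorProduct.map_tmul]
  -- nonzero entries propagate within a block
  have hnz_all : ∀ (γ : Γ) (k l k' l' : Fin (n γ)), W.e γ k l ≠ 0 → W.e γ k' l' ≠ 0 := by
    intro γ k l k' l' h h0
    exact h (hblock γ k l k' l' h0)
  -- linear independence of the nonzero matrix units
  have hcollapse : ∀ (γ : Γ) (k l : Fin (n γ)) (p : Σ γ' : Γ, Fin (n γ') × Fin (n γ')),
      W.e γ k k * eP p * W.e γ l l =
        if p = ⟨γ, (k, l)⟩ then W.e γ k l else 0 := by
    rintro γ k l ⟨γ', ⟨k', l'⟩⟩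
    by_cases hγ : γ' = γ
    · subst hγ
      show W.e γ' k k * W.e γ' k' l' * W.e γ' l l = _
      rw [W.e_mul_same]
      by_cases hk : k = k'
      · rw [if_pos hk, W.e_mul_same]
        by_cases hl : l' = l
        · rw [if_pos hl, if_pos (by simp [Sigma.mk.inj_iff, Prod.ext_iff, hk.symm, hl])]
        · rw [if_neg hl, if_neg (by simp [Sigma.mk.inj_iff, Prod.ext_iff, hl])]
      · rw [if_neg hk, zero_mul, if_neg (by
          simp only [Sigma.mk.inj_iff, Prod.ext_iff, heq_eq_eq, true_and, not_and]
          exact fun h => (hk h.symm).elim)]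
    · rw [W.e_mul_ne γ γ' (fun h => hγ h.symm), zero_mul,
        if_neg (fun h => hγ (congrArg Sigma.fst h))]
  have hli : LinearIndependent ℂ
      (fun j : {p : Σ γ' : Γ, Fin (n γ') × Fin (n γ') // eP p ≠ 0} => eP j.1) := by
    rw [Fintype.linearIndependent_iff]
    intro g hg j
    obtain ⟨⟨γ, ⟨k, l⟩⟩, hj⟩ := j
    have h := congrArg (fun x => W.e γ k k * x * W.e γ l l) hg
    simp only [mul_zero, zero_mul] at h
    rw [Finset.mul_sum, Finset.sum_mul] at h
    have hterm : ∀ j' : {p : Σ γ' : Γ, Fin (n γ') × Fin (n γ') // eP p ≠ 0},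
        W.e γ k k * (g j' • eP j'.1) * W.e γ l l =
          if j' = ⟨⟨γ, (k, l)⟩, hj⟩ then g j' • W.e γ k l else 0 := by
      intro j'
      rw [mul_smul_comm, smul_mul_assoc, hcollapse γ k l j'.1]
      by_cases hj' : j' = ⟨⟨γ, (k, l)⟩, hj⟩
      · rw [if_pos hj', if_pos (by rw [hj'])]
      · rw [if_neg hj', if_neg (fun hh => hj' (Subtype.ext hh)), smul_zero]
    rw [Finset.sum_congr rfl (fun j' _ => hterm j')] at h
    rw [Finset.sum_ite_eq' Finset.univ (⟨⟨γ, (k, l)⟩, hj⟩ :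
      {p : Σ γ' : Γ, Fin (n γ') × Fin (n γ') // eP p ≠ 0})
      (fun j' => g j' • W.e γ k l), if_pos (Finset.mem_univ _)] at h
    exact (smul_eq_zero.1 h).resolve_right hj
  obtain ⟨φ, hφ⟩ := exists_dual_family hli
  have hφ' : ∀ (i : {p : Σ γ' : Γ, Fin (n γ') × Fin (n γ') // eP p ≠ 0})
      (p : Σ γ' : Γ, Fin (n γ') × Fin (n γ')),
      φ i (eP p) = if p = i.1 then 1 else 0 := by
    intro i p
    by_cases hp : eP p = 0
    · rw [hp, map_zero, if_neg]
      intro h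
      exact i.2 (h ▸ hp)
    · have h := hφ i ⟨p, hp⟩
      rw [h]
      by_cases h2 : p = i.1
      · rw [if_pos (Subtype.ext h2.symm), if_pos h2]
      · rw [if_neg (fun hh => h2 (congrArg Subtype.val hh).symm), if_neg h2]
  have hextract : ∀ x y : (Σ γ' : Γ, Fin (n γ') × Fin (n γ')) → A,
      (∑ p, x p ⊗ₜ[ℂ] eP p = ∑ p, y p ⊗ₜ[ℂ] eP p) →
        ∀ p, eP p ≠ 0 → x p = y p := by
    intro x y h p hp
    have h2 := congrArg (sliceR (φ ⟨p, hp⟩)) h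
    rw [map_sum, map_sum] at h2
    have hterm : ∀ z : (Σ γ' : Γ, Fin (n γ') × Fin (n γ')) → A,
        ∑ p', sliceR (φ ⟨p, hp⟩) (z p' ⊗ₜ[ℂ] eP p') = z p := by
      intro z
      have : ∀ p', sliceR (φ ⟨p, hp⟩) (z p' ⊗ₜ[ℂ] eP p') =
          if p' = p then z p' else 0 := by
        intro p'
        rw [sliceR_tmul, hφ']
        by_cases hh : p' = p
        · rw [if_pos hh, if_pos hh, one_smul]
        · rw [if_neg hh, if_neg hh, zero_smul]
      rw [Finset.sum_congr rfl fun p' _ => this p',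
        Finset.sum_ite_eq' Finset.univ p z, if_pos (Finset.mem_univ _)]
    rw [hterm x, hterm y] at h2
    exact h2
  -- sigma equality lemmas
  have hsig : ∀ (γ : Γ) (x1 x2 y1 y2 : Fin (n γ)),
      ((⟨γ, (x1, x2)⟩ : Σ γ' : Γ, Fin (n γ') × Fin (n γ')) = ⟨γ, (y1, y2)⟩) ↔
        (x1 = y1 ∧ x2 = y2) := by
    intro γ x1 x2 y1 y2
    simp [Sigma.mk.inj_iff, Prod.ext_iff]
  have hsig_ne : ∀ {γ' γ : Γ}, γ' ≠ γ → ∀ (c : Fin (n γ') × Fin (n γ'))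
      (d : Fin (n γ) × Fin (n γ)),
      ((⟨γ', c⟩ : Σ γ'' : Γ, Fin (n γ'') × Fin (n γ'')) ≠ ⟨γ, d⟩) :=
    fun h _ _ hh => h (congrArg Sigma.fst hh)
  -- reusable collapse of a dual-functional slice
  have hsliceR : ∀ (p0 : Σ γ' : Γ, Fin (n γ') × Fin (n γ')) (hp0 : eP p0 ≠ 0)
      (z : (Σ γ' : Γ, Fin (n γ') × Fin (n γ')) → A),
      ∑ p', sliceR (φ ⟨p0, hp0⟩) (z p' ⊗ₜ[ℂ] eP p') = z p0 := by
    intro p0 hp0 z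
    have hterm : ∀ p', sliceR (φ ⟨p0, hp0⟩) (z p' ⊗ₜ[ℂ] eP p') =
        if p' = p0 then z p' else 0 := by
      intro p'
      rw [sliceR_tmul, hφ']
      by_cases hh : p' = p0
      · rw [if_pos hh, if_pos hh, one_smul]
      · rw [if_neg hh, if_neg hh, zero_smul]
    rw [Finset.sum_congr rfl fun p' _ => hterm p',
      Finset.sum_ite_eq' Finset.univ p0 z, if_pos (Finset.mem_univ _)]
  -- relation (iii) : left multiplication of κ(e) on the F's
  have hiii : ∀ (γ : Γ) (k l a b : Fin (n γ)), W.e γ k l ≠ 0 →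
      W.κ (W.e γ a b) * F ⟨γ, (k, l)⟩ =
        if a = k then F ⟨γ, (b, l)⟩ else 0 := by
    intro γ k l a b hnz
    have hkey := W.aux_key1 (W.e γ a b) (W.e_target γ a b).1
    rw [← hu] at hkey
    have hLexp : ((1:A) ⊗ₜ[ℂ] W.e γ a b) * u = ∑ p, F p ⊗ₜ[ℂ] (W.e γ a b * eP p) := by
      rw [← hrep1, Finset.mul_sum]
      refine Finset.sum_congr rfl fun p _ => ?_
      rw [Algebra.TensorProduct.tmul_mul_tmul, one_mul]
    have hRexp : (W.κ (W.e γ a b) ⊗ₜ[ℂ] (1:A)) * u =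
        ∑ p, (W.κ (W.e γ a b) * F p) ⊗ₜ[ℂ] eP p := by
      rw [← hrep1, Finset.mul_sum]
      refine Finset.sum_congr rfl fun p _ => ?_
      rw [Algebra.TensorProduct.tmul_mul_tmul, one_mul]
    have h2 := congrArg (sliceR (φ ⟨⟨γ,(k,l)⟩, hnz⟩)) (hLexp.symm.trans (hkey.trans hRexp))
    rw [map_sum, map_sum, hsliceR ⟨γ,(k,l)⟩ hnz] at h2
    rw [← h2]
    have hscal : ∀ p, φ ⟨⟨γ,(k,l)⟩, hnz⟩ (W.e γ a b * eP p) =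
        if a = k ∧ p = ⟨γ, (b, l)⟩ then 1 else 0 := by
      rintro ⟨γ', ⟨k', l'⟩⟩
      by_cases hγ : γ' = γ
      · subst hγ
        show φ _ (W.e γ' a b * W.e γ' k' l') = _
        rw [W.e_mul_same]
        by_cases hb : b = k'
        · rw [if_pos hb, show W.e γ' a l' = eP ⟨γ', (a, l')⟩ from rfl, hφ']
          by_cases hak : a = k
          · by_cases hll : l' = l
            · rw [if_pos (by rw [hsig]; exact ⟨hak, hll⟩),
                if_pos ⟨hak, by rw [hsig]; exact ⟨hb.symm, hll⟩⟩]
            · rw [if_neg (by rw [hsig]; exact fun hh => hll hh.2),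
                if_neg (fun hh => hll ((hsig _ _ _ _ _).1 hh.2).2)]
          · rw [if_neg (by rw [hsig]; exact fun hh => hak hh.1),
              if_neg (fun hh => hak hh.1)]
        · rw [if_neg hb, map_zero,
            if_neg (fun hh => hb (((hsig _ _ _ _ _).1 hh.2).1).symm)]
      · rw [W.e_mul_ne γ γ' (fun hh => hγ hh.symm), map_zero,
          if_neg (fun hh => (hsig_ne hγ _ _) hh.2)]
    have hsum : ∑ p, sliceR (φ ⟨⟨γ,(k,l)⟩, hnz⟩) (F p ⊗ₜ[ℂ] (W.e γ a b * eP p)) =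
        if a = k then F ⟨γ, (b, l)⟩ else 0 := by
      have hterm : ∀ p, sliceR (φ ⟨⟨γ,(k,l)⟩, hnz⟩) (F p ⊗ₜ[ℂ] (W.e γ a b * eP p)) =
          if a = k ∧ p = ⟨γ, (b, l)⟩ then F p else 0 := by
        intro p
        rw [sliceR_tmul, hscal]
        by_cases hh : a = k ∧ p = ⟨γ, (b, l)⟩
        · rw [if_pos hh, if_pos hh, one_smul]
        · rw [if_neg hh, if_neg hh, zero_smul]
      rw [Finset.sum_congr rfl fun p _ => hterm p]
      by_cases hak : a = k
      · simp only [hak, true_and]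
        simp only [Finset.sum_ite_eq', Finset.mem_univ, if_true, if_pos rfl]
      · simp only [hak, false_and, if_false, Finset.sum_const_zero]
    exact hsum
  -- relation (R3) : transposed adjoints
  have hR3 : ∀ (γ : Γ) (k l : Fin (n γ)), W.e γ k l ≠ 0 →
      star (F ⟨γ, (l, k)⟩) = F ⟨γ, (k, l)⟩ := by
    have hτinv : Function.Involutive
        (fun p : Σ γ' : Γ, Fin (n γ') × Fin (n γ') => (⟨p.1, (p.2.2, p.2.1)⟩ :
          Σ γ' : Γ, Fin (n γ') × Fin (n γ'))) := fun p => rfl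
    have hstar_u : ∑ p, star (F ⟨p.1, (p.2.2, p.2.1)⟩) ⊗ₜ[ℂ] eP p = u := by
      conv_rhs => rw [← hsu, ← hrep1]
      rw [map_sum]
      have hterm : ∀ p : Σ γ' : Γ, Fin (n γ') × Fin (n γ'),
          stT (F p ⊗ₜ[ℂ] eP p) = star (F p) ⊗ₜ[ℂ] eP ⟨p.1, (p.2.2, p.2.1)⟩ := by
        intro p
        show W.starT _ = _
        rw [W.starT_tmul]
        congr 1
        exact W.e_star p.1 p.2.1 p.2.2
      rw [Finset.sum_congr rfl fun p _ => hterm p]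
      exact (Fintype.sum_bijective _ hτinv.bijective _ _ (fun p => rfl)).symm
    intro γ k l hnz
    exact hextract _ _ (hstar_u.trans hrep1.symm) ⟨γ, (k, l)⟩ hnz
  -- relation (ii) : right multiplication of κ⁻¹(e) on the F's
  have hii : ∀ (γ : Γ) (k l a b : Fin (n γ)), W.e γ k l ≠ 0 →
      F ⟨γ, (k, l)⟩ * W.κinv (W.e γ a b) = if l = b then F ⟨γ, (k, a)⟩ else 0 := by
    intro γ k l a b hnz
    have h1 : W.κinv (W.e γ a b) = star (W.κ (W.e γ b a)) := by
      show star (W.κ (star (W.e γ a b))) = _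
      rw [W.e_star]
    rw [h1, ← hR3 γ k l hnz, ← star_mul,
      hiii γ l k b a (hnz_all γ k l l k hnz)]
    by_cases hbl : b = l
    · rw [if_pos hbl, if_pos hbl.symm, hR3 γ k a (hnz_all γ k l k a hnz)]
    · rw [if_neg hbl, if_neg (fun hh => hbl hh.symm), star_zero]
  -- relation (i) : left multiplication of e on the κ(F)'s
  have hi : ∀ (γ : Γ) (k l a b : Fin (n γ)), W.e γ k l ≠ 0 →
      W.e γ a b * W.κ (F ⟨γ, (k, l)⟩) =
        if l = b then W.κ (F ⟨γ, (k, a)⟩) else 0 := by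
    intro γ k l a b hnz
    conv_lhs => rw [← W.aux_κκinv (W.e γ a b)]
    rw [← W.κ_antimul, hii γ k l a b hnz]
    by_cases hlb : l = b
    · rw [if_pos hlb, if_pos hlb]
    · rw [if_neg hlb, if_neg hlb, map_zero]
  -- counit normalisation
  have hP1 : ∑ p, W.ε (eP p) • W.κ (F p) = 1 := by
    have h := W.ε_counit_r 1
    rw [← hu, ← hrep1, map_sum, map_sum] at h
    have hterm : ∀ p : Σ γ' : Γ, Fin (n γ') × Fin (n γ'),
        (TensorProduct.rid ℂ A) ((TensorProduct.map LinearMap.id W.ε) (F p ⊗ₜ[ℂ] eP p)) =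
          W.ε (eP p) • F p := by
      intro p
      rw [TensorProduct.map_tmul, LinearMap.id_coe, id_eq, TensorProduct.rid_tmul]
    rw [Finset.sum_congr rfl fun p _ => hterm p] at h
    have h2 := congrArg W.κ h
    rw [map_sum, W.aux_κ_one] at h2
    rw [← h2]
    exact Finset.sum_congr rfl fun p _ => (map_smul W.κ _ _).symm
  -- miscellaneous numerical facts
  have hn0 : ∀ γ : Γ, (n γ : ℂ) ≠ 0 := fun γ =>
    Nat.cast_ne_zero.2 (Nat.one_le_iff_ne_zero.1 (W.n_pos γ))
  have hκinv_smul : ∀ (c : ℂ) (x : A), W.κinv (c • x) = c • W.κinv x :=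
    fun c x => map_smul W.κIL c x
  have hκinv_zero : W.κinv (0 : A) = 0 := map_zero W.κIL
  -- the canonical element q
  set q : A := ∑ p, eP p * W.κ (F p) with hqdef
  have h_eq : ∀ (γ : Γ) (a k : Fin (n γ)), W.e γ a k ≠ 0 →
      W.e γ a k * q = (n γ : ℂ) • W.κ (F ⟨γ, (k, a)⟩) := by
    intro γ a k hnz
    rw [hqdef, Finset.mul_sum,
      sum_sigma_fin (fun p => W.e γ a k * (eP p * W.κ (F p)))]
    rw [Finset.sum_eq_single_of_mem γ (Finset.mem_univ γ) (fun γ' _ hne => ?_)]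
    · rw [Finset.sum_eq_single_of_mem k (Finset.mem_univ k) (fun k' _ hne => ?_)]
      · have hterm : ∀ l' : Fin (n γ),
            W.e γ a k * (W.e γ k l' * W.κ (F ⟨γ, (k, l')⟩)) = W.κ (F ⟨γ, (k, a)⟩) := by
          intro l'
          rw [← mul_assoc, W.e_mul_same, if_pos rfl,
            hi γ k l' a l' (hnz_all γ a k k l' hnz), if_pos rfl]
        rw [Finset.sum_congr rfl fun l' _ => hterm l', Finset.sum_const,
          Finset.card_univ, Fintype.card_fin, ← Nat.cast_smul_eq_nsmul ℂ]
      · have hterm : ∀ l' : Fin (n γ),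
            W.e γ a k * (W.e γ k' l' * W.κ (F ⟨γ, (k', l')⟩)) = 0 := by
          intro l'
          rw [← mul_assoc, W.e_mul_same, if_neg (fun hh => hne hh.symm), zero_mul]
        rw [Finset.sum_congr rfl fun l' _ => hterm l', Finset.sum_const_zero]
    · have hterm : ∀ (k' l' : Fin (n γ')),
          W.e γ a k * (W.e γ' k' l' * W.κ (F ⟨γ', (k', l')⟩)) = 0 := by
        intro k' l'
        rw [← mul_assoc, W.e_mul_ne γ γ' (fun hh => hne hh.symm), zero_mul]
      rw [Finset.sum_congr rfl fun k' _ => Finset.sum_congr rfl fun l' _ => hterm k' l']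
      simp only [Finset.sum_const_zero]
  -- the left inverse of q
  set q' : A := ∑ γ : Γ, (n γ : ℂ)⁻¹ •
      ∑ a : Fin (n γ), ∑ k : Fin (n γ), W.ε (W.e γ k a) • W.e γ a k with hq'def
  have hq'q : q' * q = 1 := by
    rw [hq'def, Finset.sum_mul]
    have hγterm : ∀ γ : Γ,
        ((n γ : ℂ)⁻¹ • ∑ a, ∑ k, W.ε (W.e γ k a) • W.e γ a k) * q =
          ∑ a, ∑ k, W.ε (W.e γ k a) • W.κ (F ⟨γ, (k, a)⟩) := by
      intro γ
      by_cases hz : ∀ a k : Fin (n γ), W.e γ a k = 0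
      · have hL : (∑ a, ∑ k : Fin (n γ), W.ε (W.e γ k a) • W.e γ a k) = 0 := by
          refine Finset.sum_eq_zero fun a _ => Finset.sum_eq_zero fun k _ => ?_
          rw [hz a k, smul_zero]
        rw [hL, smul_zero, zero_mul]
        refine (Finset.sum_eq_zero fun a _ => Finset.sum_eq_zero fun k _ => ?_).symm
        rw [hz k a, map_zero, zero_smul]
      · push_neg at hz
        obtain ⟨a0, k0, h0⟩ := hz
        rw [smul_mul_assoc, Finset.sum_mul]
        have ha : ∀ a : Fin (n γ),
            (∑ k, W.ε (W.e γ k a) • W.e γ a k) * q =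
              ∑ k, (W.ε (W.e γ k a) * (n γ : ℂ)) • W.κ (F ⟨γ, (k, a)⟩) := by
          intro a
          rw [Finset.sum_mul]
          refine Finset.sum_congr rfl fun k _ => ?_
          rw [smul_mul_assoc, h_eq γ a k (hnz_all γ a0 k0 a k h0), smul_smul]
        rw [Finset.sum_congr rfl fun a _ => ha a, Finset.smul_sum]
        refine Finset.sum_congr rfl fun a _ => ?_
        rw [Finset.smul_sum]
        refine Finset.sum_congr rfl fun k _ => ?_
        rw [smul_smul, ← mul_assoc, mul_comm ((n γ:ℂ)⁻¹) _, mul_assoc,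
          inv_mul_cancel₀ (hn0 γ), mul_one]
    rw [Finset.sum_congr rfl fun γ _ => hγterm γ, ← hP1,
      sum_sigma_fin (fun p => W.ε (eP p) • W.κ (F p))]
    exact Finset.sum_congr rfl fun γ _ => Finset.sum_comm
  -- q is invertible
  have hUnit : IsUnit q := by
    have hinj : Function.Injective (LinearMap.mulLeft ℂ q) := by
      intro x y hxy
      simp only [LinearMap.mulLeft_apply] at hxy
      have h := congrArg (fun w => q' * w) hxy
      simpa only [← mul_assoc, hq'q, one_mul] using h
    obtain ⟨y, hy⟩ := (LinearMap.injective_iff_surjective).1 hinj 1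
    rw [LinearMap.mulLeft_apply] at hy
    have hyq' : y = q' := by
      calc y = 1 * y := (one_mul y).symm
        _ = q' * q * y := by rw [hq'q]
        _ = q' * (q * y) := by rw [mul_assoc]
        _ = q' := by rw [hy, mul_one]
    exact ⟨⟨q, y, hy, by rw [hyq']; exact hq'q⟩, rfl⟩
  -- q lies in the span of the matrix units, hence in A_t
  have hGspan : ∀ p, eP p ≠ 0 → W.κ (F p) ∈ Submodule.span ℂ (Set.range eP) := by
    intro p hp
    have h1 : sliceR (φ ⟨p, hp⟩) u = F p := by
      rw [← hrep1, map_sum]; exact hsliceR p hp F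
    have h2 : sliceR (φ ⟨p, hp⟩) u =
        W.κIL (∑ p', φ ⟨p, hp⟩ (W.κIL (F p')) • eP p') := by
      conv_lhs => rw [← hrep2]
      rw [map_sum, map_sum]
      refine Finset.sum_congr rfl fun p' _ => ?_
      rw [sliceR_tmul, map_smul]
    have h3 := congrArg W.κ (h1.symm.trans h2)
    rw [W.κIL_apply, W.aux_κκinv] at h3
    rw [h3]
    exact Submodule.sum_mem _ fun p' _ =>
      Submodule.smul_mem _ _ (Submodule.subset_span ⟨p', rfl⟩)
  have hspan_tgt : ∀ x ∈ Submodule.span ℂ (Set.range eP), x ∈ W.tgt := by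
    intro x hx
    induction hx using Submodule.span_induction with
    | mem y hy =>
        obtain ⟨p, rfl⟩ := hy
        exact ⟨(W.e_target p.1 p.2.1 p.2.2).1, (W.e_target p.1 p.2.1 p.2.2).2⟩
    | zero =>
        constructor <;> simp
    | add x y hx hy hx' hy' =>
        exact ⟨by rw [map_add, hx'.1, hy'.1, TensorProduct.add_tmul, mul_add],
          by rw [map_add, hx'.2, hy'.2, TensorProduct.add_tmul, add_mul]⟩
    | smul c x hx hx' =>
        exact ⟨by rw [map_smul, hx'.1, ← mul_smul_comm, TensorProduct.smul_tmul'],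
          by rw [map_smul, hx'.2, ← smul_mul_assoc, TensorProduct.smul_tmul']⟩
  have hq_tgt : q ∈ W.tgt := by
    refine hspan_tgt q ?_
    rw [hqdef]
    refine Submodule.sum_mem _ fun p _ => ?_
    by_cases hp : eP p = 0
    · rw [hp, zero_mul]; exact Submodule.zero_mem _
    · obtain ⟨γ, k, l⟩ := p
      have h := hi γ k l k l hp
      rw [if_pos rfl] at h
      show W.e γ k l * W.κ (F ⟨γ, (k, l)⟩) ∈ _
      rw [h]
      exact hGspan ⟨γ, (k, k)⟩ (hnz_all γ k l k k hp)
  -- q satisfies the formula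
  have hqF : W.qFormula q := by
    show W.Δ 1 = ∑ γ, ∑ i, ∑ j, (n γ : ℂ)⁻¹ • (W.κinv (W.e γ i j * q) ⊗ₜ[ℂ] W.e γ j i)
    rw [← hu, ← hrep1, sum_sigma_fin (fun p => F p ⊗ₜ[ℂ] eP p)]
    refine Finset.sum_congr rfl fun γ _ => ?_
    by_cases hz : ∀ a k : Fin (n γ), W.e γ a k = 0
    · refine (Finset.sum_eq_zero fun k _ => Finset.sum_eq_zero fun l _ => ?_).trans
        (Finset.sum_eq_zero fun i _ => Finset.sum_eq_zero fun j _ => ?_).symm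
      · show F ⟨γ, (k, l)⟩ ⊗ₜ[ℂ] W.e γ k l = 0
        rw [hz k l, TensorProduct.tmul_zero]
      · rw [hz i j, zero_mul, hκinv_zero, TensorProduct.zero_tmul, smul_zero]
    · push_neg at hz
      obtain ⟨a0, k0, h0⟩ := hz
      have hterm : ∀ i j : Fin (n γ),
          (n γ : ℂ)⁻¹ • (W.κinv (W.e γ i j * q) ⊗ₜ[ℂ] W.e γ j i) =
            F ⟨γ, (j, i)⟩ ⊗ₜ[ℂ] W.e γ j i := by
        intro i j
        rw [h_eq γ i j (hnz_all γ a0 k0 i j h0), hκinv_smul,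
          show W.κinv (W.κ (F ⟨γ, (j, i)⟩)) = F ⟨γ, (j, i)⟩ from W.aux_κinvκ _,
          TensorProduct.smul_tmul', smul_smul, inv_mul_cancel₀ (hn0 γ), one_smul]
      rw [Finset.sum_congr rfl fun i _ => Finset.sum_congr rfl fun j _ => hterm i j]
      exact Finset.sum_comm
  -- uniqueness via the linear map t ↦ m(flip((κ ⊗ id) t))
  set LL : A ⊗[ℂ] A →ₗ[ℂ] A :=
    (LinearMap.mul' ℂ A).comp ((TensorProduct.map LinearMap.id W.κ).comp
      (TensorProduct.comm ℂ A A).toLinearMap) with hLL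
  have hLLt : ∀ a b : A, LL (a ⊗ₜ[ℂ] b) = b * W.κ a := by
    intro a b
    simp [hLL, LinearMap.mul'_apply]
  have huniq : ∀ z : A, W.qFormula z → LL (W.Δ 1) = z := by
    intro z hz
    conv_lhs => rw [show W.Δ 1 = ∑ γ, ∑ i, ∑ j,
      (n γ : ℂ)⁻¹ • (W.κinv (W.e γ i j * z) ⊗ₜ[ℂ] W.e γ j i) from hz]
    rw [map_sum]
    have hγterm : ∀ γ : Γ,
        LL (∑ i, ∑ j, (n γ : ℂ)⁻¹ • (W.κinv (W.e γ i j * z) ⊗ₜ[ℂ] W.e γ j i)) =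
          ∑ j : Fin (n γ), W.e γ j j * z := by
      intro γ
      rw [map_sum]
      have h1 : ∀ i : Fin (n γ),
          LL (∑ j, (n γ : ℂ)⁻¹ • (W.κinv (W.e γ i j * z) ⊗ₜ[ℂ] W.e γ j i)) =
            ∑ j, (n γ : ℂ)⁻¹ • (W.e γ j j * z) := by
        intro i
        rw [map_sum]
        refine Finset.sum_congr rfl fun j _ => ?_
        rw [map_smul, hLLt, W.aux_κκinv, ← mul_assoc, W.e_mul_same, if_pos rfl]
      rw [Finset.sum_congr rfl fun i _ => h1 i, Finset.sum_comm]
      refine Finset.sum_congr rfl fun j _ => ?_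
      rw [Finset.sum_const, Finset.card_univ, Fintype.card_fin,
        ← Nat.cast_smul_eq_nsmul ℂ, smul_smul, mul_inv_cancel₀ (hn0 γ), one_smul]
    rw [Finset.sum_congr rfl fun γ _ => hγterm γ]
    have h2 : ∀ γ : Γ, (∑ j : Fin (n γ), W.e γ j j * z) =
        (∑ j : Fin (n γ), W.e γ j j) * z := by
      intro γ; rw [Finset.sum_mul]
    rw [Finset.sum_congr rfl fun γ _ => h2 γ, ← Finset.sum_mul, W.e_sum, one_mul]
  have hLLq : LL (W.Δ 1) = q := by
    rw [← hu, ← hrep1, map_sum, hqdef]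
    exact Finset.sum_congr rfl fun p _ => hLLt _ _
  refine ⟨q, ⟨hq_tgt, hUnit, hqF⟩, ?_⟩
  rintro y ⟨-, -, hyF⟩
  exact (huniq y hyF).symm.trans hLLq
end
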